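/- For all nonnegative integers i, j and any rational x not a nonpositive integer, ∑_{k=0}^{i+j} ((−1)^{i+j+k}/(x+k))·C(k,j)·C(j,k−i) = (x)_i·(x)_j/(x)_{i+j+1}, where (x)_m = x(x+1)⋯(x+m−1) is the Pochhammer symbol and C(j, k−i) = 0 if k < i. -/

import Mathlib

open Finset

/-- The Pochhammer symbol (x)_m = x(x+1)⋯(x+m−1). -/
def pochQ (x : ℚ) (m : ℕ) : ℚ := ∏ l ∈ Finset.range m, (x + l)

lemma pochQ_succ (x : ℚ) (n : ℕ) : pochQ x (n+1) = pochQ x n * (x + n) :=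
  Finset.prod_range_succ _ _

lemma pochQ_ne_zero {x : ℚ} (hx : ∀ m : ℕ, x ≠ -(m : ℚ)) (n : ℕ) : pochQ x n ≠ 0 :=
  Finset.prod_ne_zero_iff.2 fun l _ h => hx l (by linarith)

def altS (n s m : ℕ) : ℚ :=
  ∑ t ∈ Finset.range (n+1), (-1 : ℚ)^t * (n.choose t) * ((t+s).choose m)

lemma altS_rec1 (n s m : ℕ) : altS (n+1) s m = altS n s m - altS n (s+1) m := by
  unfold altS
  rw [Finset.sum_range_succ' (fun t => (-1 : ℚ)^t * (((n+1).choose t : ℕ) : ℚ) * (((t+s).choose m : ℕ) : ℚ)) (n+1)]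
  have h1 : ∀ u ∈ Finset.range (n+1),
      (-1 : ℚ)^(u+1) * (((n+1).choose (u+1) : ℕ) : ℚ) * (((u+1+s).choose m : ℕ) : ℚ)
      = ((-1 : ℚ)^(u+1) * ((n.choose (u+1) : ℕ) : ℚ) * (((u+1+s).choose m : ℕ) : ℚ))
        + (-((-1 : ℚ)^u * ((n.choose u : ℕ) : ℚ) * (((u+(s+1)).choose m : ℕ) : ℚ))) := by
    intro u _
    have hp : ((n+1).choose (u+1)) = n.choose u + n.choose (u+1) := Nat.choose_succ_succ n u
    have he : u + 1 + s = u + (s+1) := by omega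
    rw [hp, he]
    push_cast
    ring
  rw [Finset.sum_congr rfl h1, Finset.sum_add_distrib]
  have hP1 : ∑ u ∈ Finset.range (n+1), (-1:ℚ)^(u+1) * ((n.choose (u+1) : ℕ) : ℚ) * (((u+1+s).choose m : ℕ) : ℚ)
      = (∑ t ∈ Finset.range (n+1), (-1 : ℚ)^t * ((n.choose t : ℕ) : ℚ) * (((t+s).choose m : ℕ) : ℚ)) - ((s.choose m : ℕ) : ℚ) := by
    rw [Finset.sum_range_succ (fun u => (-1:ℚ)^(u+1) * ((n.choose (u+1) : ℕ) : ℚ) * (((u+1+s).choose m : ℕ) : ℚ)) n,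
        Finset.sum_range_succ' (fun t => (-1 : ℚ)^t * ((n.choose t : ℕ) : ℚ) * (((t+s).choose m : ℕ) : ℚ)) n]
    simp [Nat.choose_succ_self]
  rw [hP1, Finset.sum_neg_distrib]
  simp
  ring

lemma altS_rec2 (n s m : ℕ) : altS n (s+1) (m+1) = altS n s (m+1) + altS n s m := by
  unfold altS
  rw [← Finset.sum_add_distrib]
  refine Finset.sum_congr rfl fun t _ => ?_
  have : t + (s+1) = (t+s) + 1 := by omega
  rw [this, Nat.choose_succ_succ']
  push_cast
  ring

lemma altS_eq_zero : ∀ (m n s : ℕ), m < n → altS n s m = 0 := by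
  intro m
  induction m with
  | zero =>
    intro n s h
    obtain ⟨n', rfl⟩ : ∃ n', n = n'+1 := ⟨n-1, by omega⟩
    rw [altS_rec1]
    have hc : ∀ s', altS n' s' 0 = ∑ t ∈ Finset.range (n'+1), (-1:ℚ)^t * ((n'.choose t : ℕ) : ℚ) := by
      intro s'; unfold altS; simp
    rw [hc, hc]; ring
  | succ m ihm =>
    intro n s h
    obtain ⟨n', rfl⟩ : ∃ n', n = n'+1 := ⟨n-1, by omega⟩
    rw [altS_rec1, altS_rec2, ihm n' s (by omega)]
    ring

lemma star (x : ℚ) (i j k : ℕ) :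
    (x + i + j + 1) * (if i+1 ≤ k then ((j.choose (k-(i+1)) : ℕ) : ℚ) else 0)
      + (x + i) * (if i ≤ k then ((j.choose (k-i) : ℕ) : ℚ) else 0)
    = (x + k) * (if i ≤ k then (((j+1).choose (k-i) : ℕ) : ℚ) else 0) := by
  rcases lt_trichotomy k i with h | h | h
  · rw [if_neg (by omega), if_neg (by omega), if_neg (by omega)]
    ring
  · subst h
    rw [if_neg (by omega), if_pos le_rfl, if_pos le_rfl, Nat.sub_self]
    simp
  · obtain ⟨t, rfl⟩ : ∃ t, k = i + 1 + t := ⟨k - (i+1), by omega⟩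
    rw [if_pos (by omega), if_pos (by omega), if_pos (by omega),
        show i + 1 + t - (i+1) = t from by omega,
        show i + 1 + t - i = t + 1 from by omega]
    have h1 : (((j+1).choose (t+1) : ℕ) : ℚ) = (j.choose t : ℕ) + ((j.choose (t+1) : ℕ) : ℚ) := by
      rw [Nat.choose_succ_succ]; push_cast; ring
    have h2 : ((t:ℚ)+1) * (((j+1).choose (t+1) : ℕ) : ℚ) = ((j:ℚ)+1) * ((j.choose t : ℕ) : ℚ) := by
      have := Nat.add_one_mul_choose_eq j t
      have h'' : (t+1) * ((j+1).choose (t+1)) = (j+1) * (j.choose t) := by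
        rw [Nat.mul_comm]; exact this.symm
      exact_mod_cast h''
    push_cast
    linear_combination (-x-(i:ℚ)) * h1 - h2

theorem partial_fraction_identity (i j : ℕ) (x : ℚ) (hx : ∀ m : ℕ, x ≠ -(m : ℚ)) :
    ∑ k ∈ Finset.range (i + j + 1),
        (-1 : ℚ) ^ (i + j + k) / (x + k) * (k.choose j : ℚ) *
          (if i ≤ k then (j.choose (k - i) : ℚ) else 0) =
      pochQ x i * pochQ x j / pochQ x (i + j + 1) := by
  have hx0 : ∀ k : ℕ, x + (k : ℚ) ≠ 0 := fun k h => hx k (by linarith)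
  induction i with
  | zero =>
    rw [Finset.sum_eq_single j]
    · have hpj := pochQ_ne_zero hx j
      have hxj := hx0 j
      rw [show (0:ℕ)+j+1 = j+1 from by omega, pochQ_succ,
          show (0:ℕ)+j+j = 2*j from by omega, pow_mul]
      simp only [Nat.choose_self, Nat.cast_one, Nat.sub_self, Nat.choose_zero_right,
        neg_one_sq, one_pow, if_pos (Nat.zero_le j), one_div, mul_one, one_mul, Nat.sub_zero]
      rw [show pochQ x 0 = 1 from Finset.prod_range_zero _, one_mul]
      rw [eq_div_iff (mul_ne_zero hpj hxj)]
      field_simp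
    · intro b hb hbj
      have : b < j := by simp at hb; omega
      simp [Nat.choose_eq_zero_of_lt this]
    · intro h
      simp at h
  | succ i ih =>
    have hSext : ∑ k ∈ Finset.range (i+j+1),
          (-1 : ℚ) ^ (i + j + k) / (x + k) * (k.choose j : ℚ) *
            (if i ≤ k then (j.choose (k - i) : ℚ) else 0)
        = ∑ k ∈ Finset.range (i+1+j+1),
          (-1 : ℚ) ^ (i + j + k) / (x + k) * (k.choose j : ℚ) *
            (if i ≤ k then (j.choose (k - i) : ℚ) else 0) := by
      rw [show i+1+j+1 = (i+j+1)+1 from by omega,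
          Finset.sum_range_succ (fun k => (-1 : ℚ) ^ (i + j + k) / (x + k) * (k.choose j : ℚ) *
            (if i ≤ k then (j.choose (k - i) : ℚ) else 0)) (i+j+1)]
      simp only [show i+j+1 - i = j+1 from by omega]
      simp [Nat.choose_succ_self]
    have hzero : ∑ k ∈ Finset.range (i+1+j+1),
        (-1:ℚ)^(i+1+j+k) * (k.choose j : ℚ) *
          (if i ≤ k then (((j+1).choose (k-i) : ℕ) : ℚ) else 0) = 0 := by
      rw [show i+1+j+1 = i + (j+2) from by omega, Finset.sum_range_add]
      have hfirst : ∑ k ∈ Finset.range i,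
          (-1:ℚ)^(i+1+j+k) * (k.choose j : ℚ) *
            (if i ≤ k then (((j+1).choose (k-i) : ℕ) : ℚ) else 0) = 0 :=
        Finset.sum_eq_zero fun k hk => by
          rw [if_neg (by simp at hk; omega)]; ring
      have hsecond : ∑ t ∈ Finset.range (j+2),
          (-1:ℚ)^(i+1+j+(i+t)) * ((i+t).choose j : ℚ) *
            (if i ≤ i+t then (((j+1).choose (i+t-i) : ℕ) : ℚ) else 0)
          = (-1:ℚ)^(j+1) * altS (j+1) i j := by
        rw [altS, Finset.mul_sum]
        refine Finset.sum_congr rfl fun t _ => ?_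
        rw [if_pos (by omega), show i+t-i = t from by omega,
            show i+1+j+(i+t) = (j+1+t) + 2*i from by omega, pow_add, pow_mul,
            show i+t = t+i from by omega]
        simp [pow_add, neg_one_sq]
        ring
      rw [hfirst, hsecond, altS_eq_zero j (j+1) i (by omega), zero_add, mul_zero]
    have key : (x+(i:ℚ)+j+1) * (∑ k ∈ Finset.range (i+1+j+1),
          (-1 : ℚ) ^ (i+1+j+k) / (x + k) * (k.choose j : ℚ) *
            (if i+1 ≤ k then (j.choose (k - (i+1)) : ℚ) else 0))
        = (x+(i:ℚ)) * ∑ k ∈ Finset.range (i+j+1),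
          (-1 : ℚ) ^ (i + j + k) / (x + k) * (k.choose j : ℚ) *
            (if i ≤ k then (j.choose (k - i) : ℚ) else 0) := by
      rw [hSext, Finset.mul_sum, Finset.mul_sum, ← sub_eq_zero, ← Finset.sum_sub_distrib]
      have hcongr : ∑ k ∈ Finset.range (i+1+j+1),
          ((x+(i:ℚ)+j+1) * ((-1 : ℚ) ^ (i+1+j+k) / (x + k) * (k.choose j : ℚ) *
              (if i+1 ≤ k then (j.choose (k - (i+1)) : ℚ) else 0))
            - (x+(i:ℚ)) * ((-1 : ℚ) ^ (i + j + k) / (x + k) * (k.choose j : ℚ) *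
              (if i ≤ k then (j.choose (k - i) : ℚ) else 0)))
          = ∑ k ∈ Finset.range (i+1+j+1),
            (-1:ℚ)^(i+1+j+k) * (k.choose j : ℚ) *
              (if i ≤ k then (((j+1).choose (k-i) : ℕ) : ℚ) else 0) := by
        refine Finset.sum_congr rfl fun k _ => ?_
        have hxk := hx0 k
        have hst := star x i j k
        have hsign : (-1:ℚ)^(i+j+k) = -(-1:ℚ)^(i+1+j+k) := by
          rw [show i+1+j+k = (i+j+k)+1 from by omega, pow_succ]; ring
        rw [hsign]
        set a := (if i+1 ≤ k then (j.choose (k-(i+1)) : ℚ) else 0) with ha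
        set b := (if i ≤ k then (j.choose (k-i) : ℚ) else 0) with hb
        set c := (if i ≤ k then (((j+1).choose (k-i) : ℕ) : ℚ) else 0) with hc
        field_simp
        linear_combination (k.choose j : ℚ) * hst
      rw [hcongr, hzero]
    rw [ih] at key
    have hne : (x+(i:ℚ)+(j:ℚ)+1) ≠ 0 := fun h => hx0 (i+j+1) (by push_cast; linarith)
    have hP := pochQ_ne_zero hx (i+j+1)
    have h1 : pochQ x (i+1+j+1) = pochQ x (i+j+1) * (x + (i:ℚ) + j + 1) := by
      rw [show i+1+j+1 = (i+j+1)+1 from by omega, pochQ_succ]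
      push_cast; ring
    rw [h1, pochQ_succ]
    apply mul_left_cancel₀ hne
    rw [key]
    field_simp
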